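/- arXiv:math/0501066 — 2 statements merged into one kernel-verified Lean document; each statement's English description precedes it below -/
import Mathlib

section
/- Define h : (0,∞) → ℝ by h(x) = −3/(2x²) + 2^{−1/2}·(3·coth(2^{1/4}·x)² − 2), where coth(y) = cosh(y)/sinh(y). Then h(x) > 0 for every x > 0, and there exists a finite constant C > 0 such that h(x) ≤ C·x² for every x > 0. -/
/-- `coth y = cosh y / sinh y`. -/
noncomputable def coth (y : ℝ) : ℝ := Real.cosh y / Real.sinh y

/-- The function `h(x) = −3/(2x²) + 2^{−1/2}·(3·coth(2^{1/4}·x)² − 2)`. -/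
noncomputable def hfun (x : ℝ) : ℝ :=
  -3 / (2 * x ^ 2) +
    (2 : ℝ) ^ (-(1 : ℝ) / 2) * (3 * coth ((2 : ℝ) ^ ((1 : ℝ) / 4) * x) ^ 2 - 2)

lemma exp_taylor_bound (x : ℝ) (hx : |x| ≤ 1) :
    |Real.exp x - (1 + x + x^2/2 + x^3/6 + x^4/24 + x^5/120)| ≤ |x|^6 * (7/4320) := by
  have h := Real.exp_bound hx (n := 6) (by norm_num)
  simp only [Finset.sum_range_succ, Finset.sum_range_zero] at h
  norm_num [Nat.factorial] at h ⊢
  convert h using 2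

lemma sinh_upper {t : ℝ} (h0 : 0 ≤ t) (h1 : t ≤ 1) :
    Real.sinh t ≤ t + t^3/6 + t^5/60 := by
  have h₁ := exp_taylor_bound t (by rwa [abs_of_nonneg h0])
  have h₂ := exp_taylor_bound (-t) (by rwa [abs_neg, abs_of_nonneg h0])
  rw [abs_of_nonneg h0, abs_le] at h₁
  rw [abs_neg, abs_of_nonneg h0, abs_le] at h₂
  have h6 : t^6 ≤ t^5 := pow_le_pow_of_le_one h0 h1 (by norm_num)
  rw [Real.sinh_eq]
  nlinarith [h₁.1, h₁.2, h₂.1, h₂.2]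

lemma sinh_lower {t : ℝ} (h0 : 0 ≤ t) (h1 : t ≤ 1) :
    t + t^3/6 ≤ Real.sinh t := by
  have h₁ := exp_taylor_bound t (by rwa [abs_of_nonneg h0])
  have h₂ := exp_taylor_bound (-t) (by rwa [abs_neg, abs_of_nonneg h0])
  rw [abs_of_nonneg h0, abs_le] at h₁
  rw [abs_neg, abs_of_nonneg h0, abs_le] at h₂
  have h6 : t^6 ≤ t^5 := pow_le_pow_of_le_one h0 h1 (by norm_num)
  rw [Real.sinh_eq]
  nlinarith [h₁.1, h₁.2, h₂.1, h₂.2]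

lemma cosh_upper {t : ℝ} (h0 : 0 ≤ t) (h1 : t ≤ 1) :
    Real.cosh t ≤ 1 + t^2/2 + t^4/20 := by
  have h₁ := exp_taylor_bound t (by rwa [abs_of_nonneg h0])
  have h₂ := exp_taylor_bound (-t) (by rwa [abs_neg, abs_of_nonneg h0])
  rw [abs_of_nonneg h0, abs_le] at h₁
  rw [abs_neg, abs_of_nonneg h0, abs_le] at h₂
  have h6 : t^6 ≤ t^4 := pow_le_pow_of_le_one h0 h1 (by norm_num)
  rw [Real.cosh_eq]
  nlinarith [h₁.1, h₁.2, h₂.1, h₂.2]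

/-- Core inequality: for `0 < y` with `y² < 3`, `sinh²y·(3 − y²) < 3y²`. -/
lemma key_ineq {y : ℝ} (hy : 0 < y) (hy3 : y^2 < 3) :
    Real.sinh y ^ 2 * (3 - y^2) < 3 * y^2 := by
  set t : ℝ := y / 2 with ht
  have ht0 : 0 < t := by positivity
  have ht1 : t ≤ 1 := by nlinarith
  have hyt : y = 2 * t := by rw [ht]; ring
  have hs : Real.sinh y = 2 * Real.sinh t * Real.cosh t := by
    rw [hyt, Real.sinh_two_mul]
  have hA := sinh_upper ht0.le ht1
  have hB := cosh_upper ht0.le ht1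
  have hsp : 0 < Real.sinh t := Real.sinh_pos_iff.mpr ht0
  have hcp : 0 < Real.cosh t := Real.cosh_pos t
  have hABp : (0:ℝ) < t + t^3/6 + t^5/60 := by positivity
  have hsu : Real.sinh y ≤ 2 * (t + t^3/6 + t^5/60) * (1 + t^2/2 + t^4/20) := by
    rw [hs]
    have : Real.sinh t * Real.cosh t ≤ (t + t^3/6 + t^5/60) * (1 + t^2/2 + t^4/20) :=
      mul_le_mul hA hB hcp.le hABp.le
    linarith
  have hsyp : 0 < Real.sinh y := Real.sinh_pos_iff.mpr hy
  have hsq : Real.sinh y ^ 2 ≤ (2 * (t + t^3/6 + t^5/60) * (1 + t^2/2 + t^4/20))^2 :=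
    pow_le_pow_left₀ hsyp.le hsu 2
  have h3y : (0:ℝ) ≤ 3 - y^2 := by linarith
  have hstep : Real.sinh y ^ 2 * (3 - y^2) ≤
      (2 * (t + t^3/6 + t^5/60) * (1 + t^2/2 + t^4/20))^2 * (3 - y^2) :=
    mul_le_mul_of_nonneg_right hsq h3y
  have hid : 12 * t^2 - (3 - 4*t^2) * (2 * (t + t^3/6 + t^5/60) * (1 + t^2/2 + t^4/20))^2
      = t^6 * (62/5 + (82/9)*t^2 + (953/300)*t^4 + (301/450)*t^6 + (823/9000)*t^8
          + (73/9000)*t^10 + (157/360000)*t^12 + (1/90000)*t^14) := by ring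
  have hpos : (0:ℝ) < t^6 * (62/5 + (82/9)*t^2 + (953/300)*t^4 + (301/450)*t^6
      + (823/9000)*t^8 + (73/9000)*t^10 + (157/360000)*t^12 + (1/90000)*t^14) := by
    positivity
  have hy2 : y^2 = 4 * t^2 := by rw [hyt]; ring
  nlinarith [hstep, hid, hpos]

/-- positivity of `g(y) = 1 + 3/sinh²y − 3/y²`. -/
lemma g_pos {y : ℝ} (hy : 0 < y) : 0 < 1 + 3 / Real.sinh y ^ 2 - 3 / y ^ 2 := by
  have hs : 0 < Real.sinh y := Real.sinh_pos_iff.mpr hy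
  have heq : 1 + 3 / Real.sinh y ^ 2 - 3 / y ^ 2
      = (y^2 * Real.sinh y ^2 + 3*y^2 - 3 * Real.sinh y ^2) / (y^2 * Real.sinh y ^2) := by
    field_simp
  rw [heq]
  apply div_pos _ (by positivity)
  rcases lt_or_ge (y^2) 3 with h3 | h3
  · have := key_ineq hy h3
    nlinarith
  · nlinarith [sq_nonneg (Real.sinh y), sq_nonneg y]

/-- quadratic upper bound for `g`. -/
lemma g_le {y : ℝ} (hy : 0 < y) :
    1 + 3 / Real.sinh y ^ 2 - 3 / y ^ 2 ≤ (5/4) * y ^ 2 := by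
  have hs : 0 < Real.sinh y := Real.sinh_pos_iff.mpr hy
  have heq : 1 + 3 / Real.sinh y ^ 2 - 3 / y ^ 2
      = (y^2 * Real.sinh y ^2 + 3*y^2 - 3 * Real.sinh y ^2) / (y^2 * Real.sinh y ^2) := by
    field_simp
  rw [heq, div_le_iff₀ (by positivity)]
  rcases le_or_gt y 1 with h1 | h1
  · -- small y : use Taylor bounds
    have hL := sinh_lower hy.le h1
    have hU := sinh_upper hy.le h1
    have hLp : (0:ℝ) < y + y^3/6 := by positivity
    have hsqL : (y + y^3/6)^2 ≤ Real.sinh y ^2 := pow_le_pow_left₀ hLp.le hL 2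
    have hsqU : Real.sinh y ^2 ≤ (y + y^3/6 + y^5/60)^2 := pow_le_pow_left₀ hs.le hU 2
    have h12 : y^12 ≤ y^6 := pow_le_pow_of_le_one hy.le h1 (by norm_num)
    nlinarith [sq_nonneg y, pow_pos hy 6, pow_pos hy 8, pow_pos hy 10]
  · -- large y : sinh y ≥ y suffices
    have hyy : y ≤ Real.sinh y := (Real.self_lt_sinh_iff.mpr hy).le
    have hs2 : y^2 ≤ Real.sinh y ^2 := pow_le_pow_left₀ hy.le hyy 2
    have h1' : (1:ℝ) ≤ y^2 := by nlinarith
    have hA : 3*y^2 ≤ 3*Real.sinh y^2 := by linarith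
    have hB : (0:ℝ) ≤ ((5/4)*y^4 - y^2) * Real.sinh y ^2 := by
      apply mul_nonneg _ (sq_nonneg _)
      nlinarith
    nlinarith [hA, hB]

lemma hfun_eq (x : ℝ) (hx : 0 < x) :
    hfun x = (2 : ℝ) ^ (-(1 : ℝ) / 2) *
      (1 + 3 / Real.sinh ((2 : ℝ) ^ ((1 : ℝ) / 4) * x) ^ 2
        - 3 / ((2 : ℝ) ^ ((1 : ℝ) / 4) * x) ^ 2) := by
  set a : ℝ := (2 : ℝ) ^ ((1 : ℝ) / 4) with ha
  have hap : 0 < a := Real.rpow_pos_of_pos (by norm_num) _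
  have ha2 : a ^ 2 = (2 : ℝ) ^ ((1 : ℝ) / 2) := by
    rw [ha, ← Real.rpow_natCast ((2:ℝ) ^ ((1:ℝ)/4)) 2, ← Real.rpow_mul (by norm_num)]
    norm_num
  have hca : (2 : ℝ) ^ (-(1 : ℝ) / 2) * a ^ 2 = 1 := by
    rw [ha2, ← Real.rpow_add (by norm_num : (0:ℝ) < 2)]
    norm_num
  have ha4 : a ^ 4 = 2 := by
    rw [ha, ← Real.rpow_natCast ((2:ℝ) ^ ((1:ℝ)/4)) 4, ← Real.rpow_mul (by norm_num)]
    norm_num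
  have hcv : (2 : ℝ) ^ (-(1 : ℝ) / 2) = 1 / a ^ 2 := by
    rw [eq_div_iff (by positivity)]
    exact hca
  have hsx : Real.sinh (a * x) ≠ 0 := (Real.sinh_pos_iff.mpr (by positivity)).ne'
  have hcoth : coth (a * x) ^ 2 = 1 + 1 / Real.sinh (a * x) ^ 2 := by
    rw [coth, div_pow, Real.cosh_sq]
    field_simp
  rw [hfun, ← ha, hcoth, hcv]
  field_simp
  rw [mul_comm x a]
  linear_combination (-3 * Real.sinh (a * x) ^ 2) * ha4

/-- `h(x) > 0` for every `x > 0`, and there is a finite constant `C > 0` with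
`h(x) ≤ C·x²` for every `x > 0`. -/
theorem stmt0 :
    (∀ x : ℝ, 0 < x → 0 < hfun x) ∧
      ∃ C : ℝ, 0 < C ∧ ∀ x : ℝ, 0 < x → hfun x ≤ C * x ^ 2 := by
  have hap : 0 < (2 : ℝ) ^ ((1 : ℝ) / 4) := Real.rpow_pos_of_pos (by norm_num) _
  have hc : (0:ℝ) < (2 : ℝ) ^ (-(1 : ℝ) / 2) := Real.rpow_pos_of_pos (by norm_num) _
  have ha2 : ((2 : ℝ) ^ ((1 : ℝ) / 4)) ^ 2 = (2 : ℝ) ^ ((1 : ℝ) / 2) := by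
    rw [← Real.rpow_natCast ((2:ℝ) ^ ((1:ℝ)/4)) 2, ← Real.rpow_mul (by norm_num)]
    norm_num
  have hca : (2 : ℝ) ^ (-(1 : ℝ) / 2) * ((2 : ℝ) ^ ((1 : ℝ) / 4)) ^ 2 = 1 := by
    rw [ha2, ← Real.rpow_add (by norm_num : (0:ℝ) < 2)]
    norm_num
  constructor
  · intro x hx
    rw [hfun_eq x hx]
    exact mul_pos hc (g_pos (by positivity))
  · refine ⟨5/4, by norm_num, fun x hx => ?_⟩
    rw [hfun_eq x hx]
    have hg := g_le (y := (2 : ℝ) ^ ((1 : ℝ) / 4) * x) (by positivity)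
    have h1 : hfun x ≤ (2 : ℝ) ^ (-(1 : ℝ) / 2) * ((5/4) * ((2 : ℝ) ^ ((1 : ℝ) / 4) * x)^2) := by
      rw [hfun_eq x hx]
      exact mul_le_mul_of_nonneg_left hg hc.le
    calc (2 : ℝ) ^ (-(1 : ℝ) / 2) *
        (1 + 3 / Real.sinh ((2 : ℝ) ^ ((1 : ℝ) / 4) * x) ^ 2
          - 3 / ((2 : ℝ) ^ ((1 : ℝ) / 4) * x) ^ 2)
        ≤ (2 : ℝ) ^ (-(1 : ℝ) / 2) * ((5/4) * ((2 : ℝ) ^ ((1 : ℝ) / 4) * x)^2) :=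
          mul_le_mul_of_nonneg_left hg hc.le
      _ = (5/4) * x^2 * ((2 : ℝ) ^ (-(1 : ℝ) / 2) * ((2 : ℝ) ^ ((1 : ℝ) / 4)) ^ 2) := by ring
      _ = (5/4) * x^2 := by rw [hca, mul_one]
end

section
/- Let σ > 0 and let ζ : [0,σ] → [0,∞) be continuous with ζ(0) = ζ(σ) = 0. For s, r ∈ [0,σ] set s ⊕ r = s + r if s + r ≤ σ and s ⊕ r = s + r − σ otherwise, and for real u, v write [u,v] for the closed interval [min(u,v), max(u,v)]. Define ζ^{[s]}(r) = ζ(s) + ζ(s ⊕ r) − 2·min_{u ∈ [s, s⊕r]} ζ(u) for r ∈ [0,σ]. Then for every s, r, r' ∈ [0,σ]: min_{u ∈ [r, r']} ζ^{[s]}(u) = min_{u ∈ [s⊕r, s⊕r']} ζ(u) − min_{u ∈ [s⊕r, s]} ζ(u) − min_{u ∈ [s⊕r', s]} ζ(u) + ζ(s). -/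
open Set

lemma img_ne {f : ℝ → ℝ} {c d : ℝ} (h : c ≤ d) : (f '' Icc c d).Nonempty :=
  (nonempty_Icc.2 h).image f

lemma bdd_img {f : ℝ → ℝ} {p q c d : ℝ} (hc : ContinuousOn f (Icc p q))
    (hsub : Icc c d ⊆ Icc p q) : BddBelow (f '' Icc c d) :=
  (isCompact_Icc.image_of_continuousOn (hc.mono hsub)).bddBelow

lemma lemA {ζ : ℝ → ℝ} {s a b : ℝ} (hsa : s ≤ a) (hab : a ≤ b)
    (hc : ContinuousOn ζ (Icc s b)) :
    sInf ((fun v => ζ v - 2 * sInf (ζ '' Icc s v)) '' Icc a b)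
      = sInf (ζ '' Icc a b) - sInf (ζ '' Icc s a) - sInf (ζ '' Icc s b) := by
  have hsb : s ≤ b := hsa.trans hab
  set F : ℝ → ℝ := fun v => ζ v - 2 * sInf (ζ '' Icc s v) with hF
  set m := sInf (ζ '' Icc a b) with hm
  have hbdd : ∀ {c d : ℝ}, s ≤ c → d ≤ b → BddBelow (ζ '' Icc c d) := by
    intro c d h1 h2
    exact bdd_img hc (Icc_subset_Icc h1 h2)
  have hsplit : ∀ {x y z : ℝ}, s ≤ x → x ≤ y → y ≤ z → z ≤ b →
      sInf (ζ '' Icc x z) = min (sInf (ζ '' Icc x y)) (sInf (ζ '' Icc y z))  := by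
    intro x y z h1 h2 h3 h4
    rw [← Icc_union_Icc_eq_Icc h2 h3, image_union,
      csInf_union (hbdd h1 (h3.trans h4)) (img_ne h2) (hbdd (h1.trans h2) h4) (img_ne h3)]
  have hanti : ∀ {x y : ℝ}, s ≤ x → x ≤ y → y ≤ b →
      sInf (ζ '' Icc s y) ≤ sInf (ζ '' Icc s x) := by
    intro x y h1 h2 h3
    exact csInf_le_csInf (hbdd le_rfl h3) (img_ne h1)
      (image_mono (Icc_subset_Icc_right h2))
  have hIle : ∀ {x : ℝ}, s ≤ x → x ≤ b → sInf (ζ '' Icc s x) ≤ ζ x := by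
    intro x h1 h2
    exact csInf_le (hbdd le_rfl h2) ⟨x, ⟨h1, le_rfl⟩, rfl⟩
  have hmle : ∀ {x : ℝ}, a ≤ x → x ≤ b → m ≤ ζ x := by
    intro x h1 h2
    exact csInf_le (hbdd hsa le_rfl) ⟨x, ⟨h1, h2⟩, rfl⟩
  apply le_antisymm
  · -- upper bound: exhibit a good point
    obtain ⟨w, hw, hmw⟩ := isCompact_Icc.exists_sInf_image_eq (nonempty_Icc.2 hab)
      (hc.mono (Icc_subset_Icc_left hsa))
    rw [← hm] at hmw
    by_cases hcase : sInf (ζ '' Icc s a) ≤ m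
    · -- I constant on [a,b]
      have hIx : ∀ {x : ℝ}, a ≤ x → x ≤ b → sInf (ζ '' Icc s x) = sInf (ζ '' Icc s a) := by
        intro x h1 h2
        refine le_antisymm (hanti hsa h1 h2) ?_
        rw [hsplit le_rfl hsa h1 h2]
        refine le_min le_rfl (hcase.trans ?_)
        exact csInf_le_csInf (hbdd hsa le_rfl) (img_ne h1)
          (image_mono (Icc_subset_Icc le_rfl h2))
      have hIb : sInf (ζ '' Icc s b) = sInf (ζ '' Icc s a) := hIx hab le_rfl
      have hFw : F w = m - sInf (ζ '' Icc s a) - sInf (ζ '' Icc s b) := by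
        simp only [hF]
        rw [hIx hw.1 hw.2, hIb, ← hmw]; ring
      exact hFw ▸ csInf_le (by
        refine ⟨m - sInf (ζ '' Icc s a) - sInf (ζ '' Icc s b), ?_⟩
        rintro _ ⟨v, hv, rfl⟩
        have h1 : sInf (ζ '' Icc s v) ≤ sInf (ζ '' Icc s a) := hanti hsa hv.1 hv.2
        have h2 : m - sInf (ζ '' Icc s b) ≤ ζ v - sInf (ζ '' Icc s v) := by
          rw [hsplit le_rfl (hsa.trans hv.1) hv.2 le_rfl]
          have h3 : m ≤ sInf (ζ '' Icc v b) := csInf_le_csInf (hbdd hsa le_rfl)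
            (img_ne hv.2) (image_mono (Icc_subset_Icc hv.1 le_rfl))
          have h4 := hIle (hsa.trans hv.1) hv.2
          have h5 := hmle hv.1 hv.2
          rcases min_cases (sInf (ζ '' Icc s v)) (sInf (ζ '' Icc v b)) with ⟨he, _⟩ | ⟨he, _⟩ <;>
            rw [he] <;> linarith
        simp only [hF]; linarith) ⟨w, hw, rfl⟩
    · push_neg at hcase
      have hIb : sInf (ζ '' Icc s b) = m := by
        rw [hsplit le_rfl hsa hab le_rfl, ← hm, min_eq_right hcase.le]
      -- first hitting point of level I a
      set Ia := sInf (ζ '' Icc s a) with hIa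
      set S := Icc a b ∩ ζ ⁻¹' Iic Ia with hS
      have hSclosed : IsClosed S :=
        ContinuousOn.preimage_isClosed_of_isClosed (hc.mono (Icc_subset_Icc_left hsa))
          isClosed_Icc isClosed_Iic
      have hwS : w ∈ S := ⟨hw, by simp only [mem_preimage, mem_Iic, ← hmw]; exact hcase.le⟩
      have hSbdd : BddBelow S := ⟨a, fun x hx => hx.1.1⟩
      set v := sInf S with hv
      have hvS : v ∈ S := hSclosed.csInf_mem ⟨w, hwS⟩ hSbdd
      have hva : a ≤ v := hvS.1.1
      have hvb : v ≤ b := hvS.1.2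
      have hζvle : ζ v ≤ Ia := hvS.2
      have hgt : ∀ x ∈ Ico a v, Ia ≤ ζ x := by
        intro x hx
        by_contra hcon
        push_neg at hcon
        exact absurd (csInf_le hSbdd ⟨⟨hx.1, hx.2.le.trans hvb⟩, hcon.le⟩) (not_le.2 hx.2)
      have hζvge : Ia ≤ ζ v := by
        rcases eq_or_lt_of_le hva with heq | hlt
        · rw [← heq, hIa]; exact hIle hsa hab
        · have hclo : v ∈ closure (Ico a v) := by
            rw [closure_Ico hlt.ne]; exact ⟨hlt.le, le_rfl⟩
          have hne : (nhdsWithin v (Ico a v)).NeBot := mem_closure_iff_nhdsWithin_neBot.mp hclo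
          haveI := hne
          have hcw : Filter.Tendsto ζ (nhdsWithin v (Ico a v)) (nhds (ζ v)) :=
            (hc v ⟨hsa.trans hva, hvb⟩).mono
              (fun x hx => ⟨hsa.trans hx.1, hx.2.le.trans hvb⟩)
          exact ge_of_tendsto hcw (eventually_nhdsWithin_of_forall hgt)
      have hζv : ζ v = Ia := le_antisymm hζvle hζvge
      have hIav : sInf (ζ '' Icc a v) = Ia := by
        apply le_antisymm
        · exact (csInf_le (hbdd hsa hvb) ⟨v, ⟨hva, le_rfl⟩, rfl⟩).trans_eq hζv
        · refine le_csInf (img_ne hva) ?_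
          rintro _ ⟨x, hx, rfl⟩
          rcases lt_or_eq_of_le hx.2 with h | h
          · exact hgt x ⟨hx.1, h⟩
          · rw [h, hζv]
      have hIv : sInf (ζ '' Icc s v) = Ia := by
        rw [hsplit le_rfl hsa hva hvb, hIav, ← hIa, min_self]
      have hFv : F v = m - Ia - sInf (ζ '' Icc s b) := by
        simp only [hF]
        rw [hIv, hζv, hIb]; ring
      exact hFv ▸ csInf_le (by
        refine ⟨-Ia, ?_⟩
        rintro _ ⟨x, hx, rfl⟩
        have h4 := hIle (hsa.trans hx.1) hx.2
        have h5 : sInf (ζ '' Icc s x) ≤ Ia := hanti hsa hx.1 hx.2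
        simp only [hF]
        nlinarith [hmle hx.1 hx.2, hcase]) ⟨v, ⟨hva, hvb⟩, rfl⟩
  · refine le_csInf (img_ne hab) ?_
    rintro _ ⟨x, hx, rfl⟩
    have h1 : sInf (ζ '' Icc s x) ≤ sInf (ζ '' Icc s a) := hanti hsa hx.1 hx.2
    have h2 : m - sInf (ζ '' Icc s b) ≤ ζ x - sInf (ζ '' Icc s x) := by
      rw [hsplit le_rfl (hsa.trans hx.1) hx.2 le_rfl]
      have h3 : m ≤ sInf (ζ '' Icc x b) := csInf_le_csInf (hbdd hsa le_rfl)
        (img_ne hx.2) (image_mono (Icc_subset_Icc hx.1 le_rfl))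
      have h4 := hIle (hsa.trans hx.1) hx.2
      have h5 := hmle hx.1 hx.2
      rcases min_cases (sInf (ζ '' Icc s x)) (sInf (ζ '' Icc x b)) with ⟨he, _⟩ | ⟨he, _⟩ <;>
        rw [he] <;> linarith
    simp only [hF]; linarith

lemma lemA' {ζ : ℝ → ℝ} {s a b : ℝ} (hba : b ≤ a) (has : a ≤ s)
    (hc : ContinuousOn ζ (Icc b s)) :
    sInf ((fun v => ζ v - 2 * sInf (ζ '' Icc v s)) '' Icc b a)
      = sInf (ζ '' Icc b a) - sInf (ζ '' Icc a s) - sInf (ζ '' Icc b s) := by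
  have himg : ∀ x y : ℝ, (fun t => ζ (-t)) '' Icc x y = ζ '' Icc (-y) (-x) := by
    intro x y
    rw [show (fun t => ζ (-t)) = ζ ∘ Neg.neg from rfl, image_comp, image_neg_Icc]
  have hcont : ContinuousOn (fun t => ζ (-t)) (Icc (-s) (-b)) := by
    refine hc.comp continuousOn_neg ?_
    intro x hx
    constructor
    · have := neg_le_neg hx.2; rwa [neg_neg] at this
    · have := neg_le_neg hx.1; rwa [neg_neg] at this
  have h := lemA (ζ := fun t => ζ (-t)) (neg_le_neg has) (neg_le_neg hba) hcont
  rw [himg, himg, himg, neg_neg, neg_neg, neg_neg] at h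
  rw [← h]
  congr 1
  have heq : ∀ v ∈ Icc (-a) (-b),
      (fun v => ζ (-v) - 2 * sInf ((fun t => ζ (-t)) '' Icc (-s) v)) v
        = ((fun v => ζ v - 2 * sInf (ζ '' Icc v s)) ∘ Neg.neg) v := by
    intro v _
    show ζ (-v) - 2 * sInf ((fun t => ζ (-t)) '' Icc (-s) v) = ζ (-v) - 2 * sInf (ζ '' Icc (-v) s)
    rw [himg, neg_neg]
  rw [image_congr heq, image_comp, image_neg_Icc, neg_neg, neg_neg]

lemma sInf_img_zero {ζ : ℝ → ℝ} {A : Set ℝ} (h0 : ∀ x ∈ A, 0 ≤ ζ x)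
    {x₀ : ℝ} (hx₀ : x₀ ∈ A) (hz : ζ x₀ = 0) : sInf (ζ '' A) = 0 := by
  have hb : BddBelow (ζ '' A) := by
    refine ⟨0, ?_⟩
    rintro _ ⟨x, hx, rfl⟩
    exact h0 x hx
  apply le_antisymm
  · exact (csInf_le hb ⟨x₀, hx₀, rfl⟩).trans_eq hz
  · refine le_csInf ⟨ζ x₀, ⟨x₀, hx₀, rfl⟩⟩ ?_
    rintro _ ⟨x, hx, rfl⟩
    exact h0 x hx

lemma csInf_const_add {c : ℝ} {S : Set ℝ} (hne : S.Nonempty) (hbd : BddBelow S) :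
    sInf ((fun x => c + x) '' S) = c + sInf S :=
  ((Monotone.map_csInf_of_continuousAt (continuousAt_id.const_add c)
    (fun _ _ h => by simpa using h) hne hbd)).symm
open Set

section
variable {ζ : ℝ → ℝ}

lemma key (σ : ℝ) (hσ : 0 < σ) (ζ : ℝ → ℝ)
    (hζcont : ContinuousOn ζ (Icc 0 σ))
    (hζnonneg : ∀ u ∈ Icc (0 : ℝ) σ, 0 ≤ ζ u)
    (hζ0 : ζ 0 = 0) (hζσ : ζ σ = 0)
    (oplus : ℝ → ℝ → ℝ)
    (hoplus : ∀ s r : ℝ, oplus s r = if s + r ≤ σ then s + r else s + r - σ)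
    (ζre : ℝ → ℝ → ℝ)
    (hζre : ∀ s r : ℝ,
      ζre s r = ζ s + ζ (oplus s r) - 2 * sInf (ζ '' uIcc s (oplus s r)))
    (s : ℝ) (hs : s ∈ Icc (0:ℝ) σ) (r : ℝ) (hr : r ∈ Icc (0:ℝ) σ)
    (r' : ℝ) (hr' : r' ∈ Icc (0:ℝ) σ) (hrr' : r ≤ r') :
    sInf (ζre s '' Icc r r')
        = sInf (ζ '' uIcc (oplus s r) (oplus s r'))
          - sInf (ζ '' uIcc (oplus s r) s)
          - sInf (ζ '' uIcc (oplus s r') s)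
          + ζ s := by
  obtain ⟨hs0, hsσ⟩ := hs
  obtain ⟨hr0, hrσ⟩ := hr
  obtain ⟨hr'0, hr'σ⟩ := hr'
  have hbddζ : ∀ {A : Set ℝ}, A ⊆ Icc 0 σ → BddBelow (ζ '' A) := by
    intro A hA
    refine ⟨0, ?_⟩
    rintro _ ⟨x, hx, rfl⟩
    exact hζnonneg x (hA hx)
  rcases le_or_gt r' (σ - s) with hc1 | h1
  · -- Case 1 : no wrap
    have ha : oplus s r = s + r := by rw [hoplus, if_pos (by linarith)]
    have hb : oplus s r' = s + r' := by rw [hoplus, if_pos (by linarith)]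
    have himg : ζre s '' Icc r r'
        = ((fun x => ζ s + x) ∘ (fun v => ζ v - 2 * sInf (ζ '' Icc s v))) '' Icc (s+r) (s+r') := by
      rw [← image_const_add_Icc (a := s) (b := r) (c := r'), ← image_comp]
      apply image_congr
      intro u hu
      rw [hζre, hoplus, if_pos (by linarith [hu.2] : s + u ≤ σ)]
      simp only [Function.comp_apply]
      rw [uIcc_of_le (by linarith [hu.1, hr0] : s ≤ s + u)]
      ring
    rw [himg, image_comp, csInf_const_add (img_ne (by linarith)) (by
        refine ⟨-2 * ζ s, ?_⟩
        rintro _ ⟨v, hv, rfl⟩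
        have h1 : sInf (ζ '' Icc s v) ≤ ζ s := csInf_le
          (hbddζ (Icc_subset_Icc hs0 (by linarith [hv.2]))) ⟨s, ⟨le_rfl, by linarith [hv.1, hr0]⟩, rfl⟩
        have h2 : 0 ≤ ζ v := hζnonneg v ⟨by linarith [hv.1, hr0], by linarith [hv.2]⟩
        simp only
        linarith),
      lemA (by linarith : s ≤ s + r) (by linarith : s + r ≤ s + r')
        (hζcont.mono (Icc_subset_Icc hs0 (by linarith)))]
    rw [ha, hb, uIcc_of_le (by linarith : s + r ≤ s + r'),
      uIcc_of_ge (by linarith : s ≤ s + r), uIcc_of_ge (by linarith : s ≤ s + r')]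
    ring
  · rcases le_or_gt r (σ - s) with hc2 | h2
    · -- Case 2 : wrap inside
      set t := σ - s with ht
      set a := s + r with hadef
      set b := s + r' - σ with hbdef
      have htr : r ≤ t := hc2
      have htr' : t ≤ r' := h1.le
      have hb0 : 0 < b := by simp only [hbdef]; linarith
      have hbs : b ≤ s := by simp only [hbdef]; linarith
      have hsa : s ≤ a := by simp only [hadef]; linarith
      have haσ : a ≤ σ := by simp only [hadef]; linarith
      have ha : oplus s r = a := by rw [hoplus, if_pos (by linarith)]
      have hbop : oplus s r' = b := by rw [hoplus, if_neg (by push_neg; linarith)]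
      have hst : s + t = σ := by simp only [ht]; ring
      -- split the interval at t
      have hbre : ∀ A : Set ℝ, A ⊆ Icc 0 σ → BddBelow (ζre s '' A) := by
        intro A hA
        refine ⟨-ζ s, ?_⟩
        rintro _ ⟨u, hu, rfl⟩
        obtain ⟨hu0, huσ⟩ := hA hu
        rw [hζre]
        have hop : oplus s u ∈ Icc (0:ℝ) σ := by
          rw [hoplus]; split <;> constructor <;> linarith
        have hsubu : uIcc s (oplus s u) ⊆ Icc 0 σ := by
          rw [← uIcc_of_le hσ.le]
          exact uIcc_subset_uIcc (by rw [uIcc_of_le hσ.le]; exact ⟨hs0, hsσ⟩)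
            (by rw [uIcc_of_le hσ.le]; exact hop)
        have h1 : sInf (ζ '' uIcc s (oplus s u)) ≤ ζ s :=
          csInf_le (hbddζ hsubu) ⟨s, left_mem_uIcc, rfl⟩
        have h2 : 0 ≤ ζ (oplus s u) := hζnonneg _ hop
        linarith
      have hsplitre : sInf (ζre s '' Icc r r')
          = min (sInf (ζre s '' Icc r t)) (sInf (ζre s '' Icc t r')) := by
        rw [← Icc_union_Icc_eq_Icc htr htr', image_union,
          csInf_union (hbre _ (Icc_subset_Icc hr0 (by linarith))) (img_ne htr)
            (hbre _ (Icc_subset_Icc (by linarith) hr'σ)) (img_ne htr')]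
      -- part 1 : over [r, t]
      have hpart1 : sInf (ζre s '' Icc r t) = ζ s - sInf (ζ '' Icc s a) := by
        have himg : ζre s '' Icc r t
            = ((fun x => ζ s + x) ∘ (fun v => ζ v - 2 * sInf (ζ '' Icc s v))) '' Icc a σ := by
          rw [show Icc a σ = Icc (s + r) (s + t) by rw [hst], ← image_const_add_Icc, ← image_comp]
          apply image_congr
          intro u hu
          rw [hζre, hoplus, if_pos (by linarith [hu.2] : s + u ≤ σ)]
          simp only [Function.comp_apply]
          rw [uIcc_of_le (by linarith [hu.1, hr0] : s ≤ s + u)]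
          ring
        rw [himg, image_comp, csInf_const_add (img_ne haσ) (by
            refine ⟨-2 * ζ s, ?_⟩
            rintro _ ⟨v, hv, rfl⟩
            have h1 : sInf (ζ '' Icc s v) ≤ ζ s := csInf_le
              (hbddζ (Icc_subset_Icc hs0 hv.2)) ⟨s, ⟨le_rfl, by linarith [hv.1]⟩, rfl⟩
            have h2 : 0 ≤ ζ v := hζnonneg v ⟨by linarith [hv.1], hv.2⟩
            simp only
            linarith),
          lemA hsa haσ (hζcont.mono (Icc_subset_Icc hs0 le_rfl))]
        rw [sInf_img_zero (A := Icc a σ) (fun x hx => hζnonneg x ⟨by linarith [hx.1], hx.2⟩)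
            (⟨haσ, le_rfl⟩ : σ ∈ Icc a σ) hζσ,
          sInf_img_zero (A := Icc s σ) (fun x hx => hζnonneg x ⟨by linarith [hx.1], hx.2⟩)
            (⟨hsσ, le_rfl⟩ : σ ∈ Icc s σ) hζσ]
        ring
      -- part 2 : over [t, r']
      have hg0 : ζ s + (ζ 0 - 2 * sInf (ζ '' Icc 0 s)) = ζ s := by
        rw [hζ0, sInf_img_zero (A := Icc 0 s) (fun x hx => hζnonneg x ⟨hx.1, by linarith [hx.2]⟩)
          (⟨le_rfl, hs0⟩ : (0:ℝ) ∈ Icc 0 s) hζ0]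
        ring
      have hpart2 : sInf (ζre s '' Icc t r') = ζ s - sInf (ζ '' Icc b s) := by
        have hret : ζre s t = ζ s := by
          rw [hζre, hoplus, if_pos (by linarith : s + t ≤ σ), hst, uIcc_of_le hsσ,
            hζσ, sInf_img_zero (A := Icc s σ) (fun x hx => hζnonneg x ⟨by linarith [hx.1], hx.2⟩)
              (⟨hsσ, le_rfl⟩ : σ ∈ Icc s σ) hζσ]
          ring
        have e2 : ζre s '' Ioc t r'
            = (fun v => ζ s + (ζ v - 2 * sInf (ζ '' Icc v s))) '' Ioc 0 b := by
          rw [show Ioc (0:ℝ) b = Ioc (t + (s - σ)) (r' + (s - σ)) by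
              rw [show t + (s - σ) = 0 by simp only [ht]; ring,
                show r' + (s - σ) = b by simp only [hbdef]; ring],
            ← image_add_const_Ioc, ← image_comp]
          apply image_congr
          intro u hu
          rw [hζre, hoplus, if_neg (by push_neg; simp only [ht] at hu; linarith [hu.1])]
          simp only [Function.comp_apply]
          rw [uIcc_of_ge (by linarith [hu.2] : s + u - σ ≤ s),
            show u + (s - σ) = s + u - σ by ring]
          ring
        have e1 : ζre s '' Icc t r' = insert (ζ s) (ζre s '' Ioc t r') := by
          rw [← Ioc_insert_left htr', image_insert_eq, hret]
        have e3 : (fun v => ζ s + (ζ v - 2 * sInf (ζ '' Icc v s))) '' Icc 0 b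
            = insert (ζ s) ((fun v => ζ s + (ζ v - 2 * sInf (ζ '' Icc v s))) '' Ioc 0 b) := by
          rw [← Ioc_insert_left hb0.le, image_insert_eq, hg0]
        rw [← e2, ← e1] at e3
        rw [← e3]
        have himg : (fun v => ζ s + (ζ v - 2 * sInf (ζ '' Icc v s))) '' Icc 0 b
            = ((fun x => ζ s + x) ∘ (fun v => ζ v - 2 * sInf (ζ '' Icc v s))) '' Icc 0 b := rfl
        rw [himg, image_comp, csInf_const_add (img_ne hb0.le) (by
            refine ⟨-2 * ζ s, ?_⟩
            rintro _ ⟨v, hv, rfl⟩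
            have h1 : sInf (ζ '' Icc v s) ≤ ζ s := csInf_le
              (hbddζ (Icc_subset_Icc hv.1 hsσ)) ⟨s, ⟨by linarith [hv.2], le_rfl⟩, rfl⟩
            have h2 : 0 ≤ ζ v := hζnonneg v ⟨hv.1, by linarith [hv.2]⟩
            simp only
            linarith),
          lemA' hb0.le hbs (hζcont.mono (Icc_subset_Icc le_rfl hsσ))]
        rw [sInf_img_zero (A := Icc 0 b) (fun x hx => hζnonneg x ⟨hx.1, by linarith [hx.2]⟩)
          (⟨le_rfl, hb0.le⟩ : (0:ℝ) ∈ Icc 0 b) hζ0,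
          sInf_img_zero (A := Icc 0 s) (fun x hx => hζnonneg x ⟨hx.1, by linarith [hx.2]⟩)
          (⟨le_rfl, hs0⟩ : (0:ℝ) ∈ Icc 0 s) hζ0]
        ring
      rw [hsplitre, hpart1, hpart2, ha, hbop, uIcc_of_ge (hbs.trans hsa),
        uIcc_of_ge hsa, uIcc_of_le hbs]
      rw [← Icc_union_Icc_eq_Icc hbs hsa, image_union,
        csInf_union (hbddζ (Icc_subset_Icc (by linarith) hsσ)) (img_ne hbs)
          (hbddζ (Icc_subset_Icc hs0 haσ)) (img_ne hsa)]
      rcases le_total (sInf (ζ '' Icc s a)) (sInf (ζ '' Icc b s)) with h | h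
      · rw [min_eq_right (by linarith), min_eq_right h]; ring
      · rw [min_eq_left (by linarith), min_eq_left h]; ring
    · -- Case 3 : all wrapped
      have ha : oplus s r = s + r - σ := by rw [hoplus, if_neg (by push_neg; linarith)]
      have hb : oplus s r' = s + r' - σ := by rw [hoplus, if_neg (by push_neg; linarith)]
      have himg : ζre s '' Icc r r'
          = ((fun x => ζ s + x) ∘ (fun v => ζ v - 2 * sInf (ζ '' Icc v s))) ''
              Icc (s + r - σ) (s + r' - σ) := by
        rw [show Icc (s + r - σ) (s + r' - σ) = Icc (r + (s - σ)) (r' + (s - σ)) by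
            rw [show r + (s - σ) = s + r - σ by ring, show r' + (s - σ) = s + r' - σ by ring],
          ← image_add_const_Icc, ← image_comp]
        apply image_congr
        intro u hu
        rw [hζre, hoplus, if_neg (by push_neg; linarith [hu.1])]
        simp only [Function.comp_apply]
        rw [uIcc_of_ge (by linarith [hu.2] : s + u - σ ≤ s),
          show u + (s - σ) = s + u - σ by ring]
        ring
      have h0a : 0 ≤ s + r - σ := by linarith
      have habl : s + r - σ ≤ s + r' - σ := by linarith
      have hbs : s + r' - σ ≤ s := by linarith
      rw [himg, image_comp, csInf_const_add (img_ne habl) (by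
          refine ⟨-2 * ζ s, ?_⟩
          rintro _ ⟨v, hv, rfl⟩
          have h1 : sInf (ζ '' Icc v s) ≤ ζ s := csInf_le
            (hbddζ (Icc_subset_Icc (by linarith [hv.1]) hsσ))
            ⟨s, ⟨by linarith [hv.2], le_rfl⟩, rfl⟩
          have h2 : 0 ≤ ζ v := hζnonneg v ⟨by linarith [hv.1], by linarith [hv.2]⟩
          simp only
          linarith),
        lemA' habl hbs (hζcont.mono (Icc_subset_Icc h0a hsσ))]
      rw [ha, hb, uIcc_of_le habl, uIcc_of_le (by linarith : s + r - σ ≤ s),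
        uIcc_of_le hbs]
      ring

end

/-- Let `σ > 0` and let `ζ : [0,σ] → [0,∞)` be continuous with `ζ(0) = ζ(σ) = 0`.
For `s, r ∈ [0,σ]` set `s ⊕ r = s + r` if `s + r ≤ σ` and `s ⊕ r = s + r − σ`
otherwise, and for real `u, v` write `[u,v]` for the closed interval
`[min(u,v), max(u,v)]` (here `Set.uIcc`). Define
`ζ^{[s]}(r) = ζ(s) + ζ(s ⊕ r) − 2·min_{u ∈ [s, s⊕r]} ζ(u)` for `r ∈ [0,σ]`.
Then for every `s, r, r' ∈ [0,σ]`: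
`min_{u ∈ [r,r']} ζ^{[s]}(u) = min_{u ∈ [s⊕r, s⊕r']} ζ(u) − min_{u ∈ [s⊕r, s]} ζ(u)
  − min_{u ∈ [s⊕r', s]} ζ(u) + ζ(s)`, the minima being realized as `sInf` of images. -/
theorem stmt12 (σ : ℝ) (hσ : 0 < σ) (ζ : ℝ → ℝ)
    (hζcont : ContinuousOn ζ (Icc 0 σ))
    (hζnonneg : ∀ u ∈ Icc (0 : ℝ) σ, 0 ≤ ζ u)
    (hζ0 : ζ 0 = 0) (hζσ : ζ σ = 0)
    (oplus : ℝ → ℝ → ℝ)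
    (hoplus : ∀ s r : ℝ, oplus s r = if s + r ≤ σ then s + r else s + r - σ)
    (ζre : ℝ → ℝ → ℝ)
    (hζre : ∀ s r : ℝ,
      ζre s r = ζ s + ζ (oplus s r) - 2 * sInf (ζ '' uIcc s (oplus s r))) :
    ∀ s ∈ Icc (0 : ℝ) σ, ∀ r ∈ Icc (0 : ℝ) σ, ∀ r' ∈ Icc (0 : ℝ) σ,
      sInf (ζre s '' uIcc r r')
        = sInf (ζ '' uIcc (oplus s r) (oplus s r'))
          - sInf (ζ '' uIcc (oplus s r) s)
          - sInf (ζ '' uIcc (oplus s r') s)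
          + ζ s := by
  intro s hs r hr r' hr'
  rcases le_total r r' with h | h
  · rw [uIcc_of_le h]
    exact key σ hσ ζ hζcont hζnonneg hζ0 hζσ oplus hoplus ζre hζre s hs r hr r' hr' h
  · have hk := key σ hσ ζ hζcont hζnonneg hζ0 hζσ oplus hoplus ζre hζre s hs r' hr' r hr h
    rw [uIcc_of_ge h, uIcc_comm (oplus s r) (oplus s r')]
    rw [hk]
    ring
end
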